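/- arXiv:1306.1242 — 3 statements merged into one kernel-verified Lean document; each statement's English description precedes it below -/
import Mathlib

section
/- For every n ≥ 1 there exist semisimple (diagonalizable) elements x, y ∈ GSO_{2n}(ℂ) with equal multipliers ν(x) = ν(y) that are conjugate by an element of GL_{2n}(ℂ) but are not conjugate by any element of GSO_{2n}(ℂ). -/
open Matrix

noncomputable section

/-- 2n×2n matrices, indexed by `Fin n ⊕ Fin n`. -/
abbrev Mat (n : ℕ) (k : Type*) := Matrix (Fin n ⊕ Fin n) (Fin n ⊕ Fin n) k

/-- The standard split symmetric form matrix `Q_{2n} = [[0, 1], [1, 0]]`. -/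
def Qmat (n : ℕ) : Mat n ℂ := fromBlocks 0 1 1 0

/-- `A ∈ GO_{2n}(ℂ)` with multiplier `ν`. -/
def inGO (n : ℕ) (A : Mat n ℂ) (ν : ℂ) : Prop :=
  IsUnit A.det ∧ ν ≠ 0 ∧ Aᵀ * Qmat n * A = ν • Qmat n

/-- `A ∈ GSO_{2n}(ℂ)` with multiplier `ν`: in `GO_{2n}` and `det A = ν ^ n`. -/
def inGSO (n : ℕ) (A : Mat n ℂ) (ν : ℂ) : Prop :=
  inGO n A ν ∧ A.det = ν ^ n

/-- A square matrix is semisimple (diagonalizable). -/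
def IsDiagonalizable {m : Type*} [Fintype m] [DecidableEq m] (A : Matrix m m ℂ) : Prop :=
  ∃ (P : Matrix m m ℂ) (d : m → ℂ), IsUnit P.det ∧ A = P * Matrix.diagonal d * P⁻¹

namespace GSOaux

variable (n : ℕ)

/-- the full swap `inl i ↔ inr i`. -/
def τ : Equiv.Perm (Fin n ⊕ Fin n) := Equiv.sumComm (Fin n) (Fin n)

lemma τ_inl (i : Fin n) : τ n (Sum.inl i) = Sum.inr i := rfl
lemma τ_inr (i : Fin n) : τ n (Sum.inr i) = Sum.inl i := rfl
lemma τ_τ (u) : τ n (τ n u) = u := by cases u <;> rfl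

def E : Fin n ⊕ Fin n → ℤ := Sum.elim (fun i => (i : ℤ) + 1) (fun i => -((i : ℤ) + 1))

lemma E_inj : Function.Injective (E n) := by
  rintro (i | i) (j | j) h <;> simp only [E, Sum.elim_inl, Sum.elim_inr] at h
  · exact congrArg Sum.inl (Fin.ext (by omega))
  · exact absurd h (by omega)
  · exact absurd h (by omega)
  · exact congrArg Sum.inr (Fin.ext (by omega))

def d : Fin n ⊕ Fin n → ℂ := fun u => ((2 : ℝ) ^ (E n u) : ℝ)

lemma d_inj : Function.Injective (d n) := by
  intro u v h
  apply E_inj n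
  have := Complex.ofReal_inj.mp h
  exact zpow_right_injective₀ (by norm_num) (by norm_num) this

lemma d_pair (u) : d n u * d n (τ n u) = 1 := by
  cases u <;>
    · simp only [d, τ_inl, τ_inr, E, Sum.elim_inl, Sum.elim_inr]
      rw [← Complex.ofReal_mul, ← zpow_add₀ (by norm_num : (2:ℝ) ≠ 0)]
      norm_num

lemma Qmat_apply (u v) : Qmat n u v = if v = τ n u then 1 else 0 := by
  rcases u with i | i <;> rcases v with j | j <;>
    simp [Qmat, fromBlocks, τ_inl, τ_inr, one_apply, eq_comm]

/-- any diagonal matrix whose entries pair up to `ν` is in `GSO`. -/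
lemma diag_inGSO (c : Fin n ⊕ Fin n → ℂ) (ν : ℂ) (hν : ν ≠ 0)
    (hpair : ∀ u, c u * c (τ n u) = ν) : inGSO n (diagonal c) ν := by
  have hprod : ∏ u, c u = ν ^ n := by
    rw [Fintype.prod_sum_type, ← Finset.prod_mul_distrib]
    calc ∏ i : Fin n, c (Sum.inl i) * c (Sum.inr i)
        = ∏ _i : Fin n, ν := Finset.prod_congr rfl fun i _ => hpair (Sum.inl i)
      _ = ν ^ n := by simp
  have hdet : (diagonal c).det = ν ^ n := by rw [det_diagonal, hprod]
  refine ⟨⟨?_, hν, ?_⟩, hdet⟩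
  · rw [hdet]; exact (isUnit_iff_ne_zero.mpr (pow_ne_zero _ hν))
  · ext u v
    rw [diagonal_transpose, mul_diagonal, diagonal_mul, Matrix.smul_apply,
      Qmat_apply, smul_eq_mul]
    by_cases h : v = τ n u
    · subst h
      rw [if_pos rfl, mul_one, mul_one]
      exact hpair u
    · rw [if_neg h, mul_zero, mul_zero, zero_mul]

end GSOaux


open GSOaux

/-- For every `n ≥ 1` there are semisimple elements of `GSO_{2n}(ℂ)` with equal
multipliers which are `GL_{2n}(ℂ)`-conjugate but not `GSO_{2n}(ℂ)`-conjugate. -/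
theorem gso_conjugacy_fails (n : ℕ) (hn : 1 ≤ n) :
    ∃ (x y : Mat n ℂ) (ν : ℂ),
      inGSO n x ν ∧ inGSO n y ν ∧ IsDiagonalizable x ∧ IsDiagonalizable y ∧
      (∃ g : Mat n ℂ, IsUnit g.det ∧ g * x * g⁻¹ = y) ∧
      ¬ (∃ (g : Mat n ℂ) (νg : ℂ), inGSO n g νg ∧ g * x * g⁻¹ = y) := by
  have hn0 : 0 < n := hn
  set z : Fin n := ⟨0, hn0⟩ with hz
  set σ : Equiv.Perm (Fin n ⊕ Fin n) := Equiv.swap (Sum.inl z) (Sum.inr z) with hσ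
  have hσσ : ∀ u, σ (σ u) = u := fun u => Equiv.swap_apply_self _ _ u
  have hστ : ∀ u, σ (τ n u) = τ n (σ u) := by
    rintro (i | i) <;> by_cases h : i = z <;>
      simp [hσ, τ_inl, τ_inr, h, Equiv.swap_apply_of_ne_of_ne,
        Sum.inl_injective.ne_iff, Sum.inr_injective.ne_iff]
  set x : Mat n ℂ := diagonal (d n) with hx
  set y : Mat n ℂ := diagonal (d n ∘ σ) with hy
  have hd'pair : ∀ u, (d n ∘ σ) u * (d n ∘ σ) (τ n u) = 1 := by
    intro u
    simp only [Function.comp_apply, ← hστ u]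
    have := d_pair n (σ u)
    rw [← this]
    by_cases h : τ n (σ u) = σ (τ n u)
    · rw [hστ]
    · exact absurd (hστ u).symm h
  have hxGSO : inGSO n x 1 := diag_inGSO n _ 1 one_ne_zero (d_pair n)
  have hyGSO : inGSO n y 1 := diag_inGSO n _ 1 one_ne_zero hd'pair
  refine ⟨x, y, 1, hxGSO, hyGSO, ⟨1, d n, by simp, by simp [hx]⟩,
    ⟨1, d n ∘ σ, by simp, by simp [hy]⟩, ?_, ?_⟩
  · -- GL-conjugacy by the permutation matrix of σ
    refine ⟨σ.permMatrix ℂ, ?_, ?_⟩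
    · rw [det_permutation]; simp [hσ, Equiv.Perm.sign_swap]
    · have hgx : σ.permMatrix ℂ * x = y * σ.permMatrix ℂ := by
        ext u v
        rw [hx, hy, mul_diagonal, diagonal_mul]
        simp only [Equiv.Perm.permMatrix, PEquiv.toMatrix_apply, Equiv.toPEquiv_apply,
          Option.mem_def, Option.some.injEq, Function.comp_apply]
        by_cases h : σ u = v
        · subst h; simp
        · simp [h]
      have hu : IsUnit (σ.permMatrix ℂ).det := by
        rw [det_permutation]; simp [hσ, Equiv.Perm.sign_swap]
      calc σ.permMatrix ℂ * x * (σ.permMatrix ℂ)⁻¹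
          = y * (σ.permMatrix ℂ * (σ.permMatrix ℂ)⁻¹) := by
            rw [hgx, Matrix.mul_assoc]
        _ = y := by rw [Matrix.mul_nonsing_inv _ hu, Matrix.mul_one]
  · -- no GSO-conjugacy
    rintro ⟨g, νg, ⟨⟨hgu, hνg, hQ⟩, hgdet⟩, hconj⟩
    have hgx : g * x = y * g := by
      have := congrArg (· * g) hconj
      simpa [Matrix.mul_assoc, Matrix.nonsing_inv_mul g hgu] using this
    -- support of g
    have hsupp : ∀ u v, v ≠ σ u → g u v = 0 := by
      intro u v huv
      have h1 : g u v * d n v = d n (σ u) * g u v := by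
        have := congrFun (congrFun hgx u) v
        rwa [hx, hy, mul_diagonal, diagonal_mul, Function.comp_apply] at this
      have h2 : g u v * (d n v - d n (σ u)) = 0 := by linear_combination h1
      rcases mul_eq_zero.mp h2 with h | h
      · exact h
      · exact absurd (d_inj n (sub_eq_zero.mp h)) huv
    -- e v = g (σ v) v ; pairing from the form condition
    set e : Fin n ⊕ Fin n → ℂ := fun v => g (σ v) v with he
    have hepair : ∀ u, e u * e (τ n u) = νg := by
      intro u
      have h := congrFun (congrFun hQ u) (τ n u)
      rw [Matrix.smul_apply, Qmat_apply, if_pos rfl, smul_eq_mul, mul_one] at h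
      rw [Matrix.mul_assoc, mul_apply] at h
      -- (gᵀ * (Q * g)) u (τ u) = Σ_k g k u * (Q*g) k (τ u), (Q*g) k w = g (τ k) w
      have hQg : ∀ k w, (Qmat n * g) k w = g (τ n k) w := by
        intro k w
        rw [mul_apply]
        rw [Finset.sum_eq_single (τ n k)]
        · rw [Qmat_apply, if_pos rfl, one_mul]
        · intro b _ hb; rw [Qmat_apply, if_neg hb, zero_mul]
        · simp
      rw [Finset.sum_eq_single (σ u)] at h
      · rw [transpose_apply, hQg] at h
        simp only [he]
        rw [hστ u]
        exact h
      · intro b _ hb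
        rw [transpose_apply, hsupp b u (fun hc => hb (by rw [hc, hσσ])), zero_mul]
      · simp
    -- g = permMatrix σ * diagonal e
    have hgfact : g = σ.permMatrix ℂ * diagonal e := by
      ext u v
      rw [mul_diagonal]
      simp only [Equiv.Perm.permMatrix, PEquiv.toMatrix_apply, Equiv.toPEquiv_apply,
        Option.mem_def, Option.some.injEq]
      by_cases h : σ u = v
      · subst h
        rw [if_pos rfl, one_mul]
        simp only [he]
        rw [hσσ]
      · rw [if_neg h, zero_mul, hsupp u v (fun hc => h hc.symm)]
    have hprode : ∏ u, e u = νg ^ n := by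
      rw [Fintype.prod_sum_type, ← Finset.prod_mul_distrib]
      calc ∏ i : Fin n, e (Sum.inl i) * e (Sum.inr i)
          = ∏ _i : Fin n, νg := Finset.prod_congr rfl fun i _ => hepair (Sum.inl i)
        _ = νg ^ n := by simp
    have hdetg : g.det = -νg ^ n := by
      rw [hgfact, det_mul, det_permutation, det_diagonal, hprode]
      simp [hσ, Equiv.Perm.sign_swap]
    rw [hgdet] at hdetg
    have : νg ^ n = 0 := by linear_combination (1/2 : ℂ) * hdetg
    exact hνg (pow_eq_zero_iff hn0.ne' |>.mp this)
end
end

section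
/- Let n ≥ 1 and let k = (k_1, …, k_n) be a regular tuple of integers. Then the centralizer in GSp_{2n}(ℂ) of the set {D_k(w) : w ∈ ℂ×} is exactly the diagonal torus {diag(t_1, …, t_n, t_1^{−1}x, …, t_n^{−1}x) : t_1, …, t_n, x ∈ ℂ×}. -/
open Matrix

noncomputable section

/-- The standard symplectic form matrix `J_{2n} = [[0, 1], [-1, 0]]`. -/
def Jmat (n : ℕ) : Mat n ℂ := fromBlocks 0 1 (-1) 0

/-- `A ∈ GSp_{2n}(ℂ)` with symplectic multiplier `ν`. -/
def inGSp (n : ℕ) (A : Mat n ℂ) (ν : ℂ) : Prop :=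
  IsUnit A.det ∧ ν ≠ 0 ∧ Aᵀ * Jmat n * A = ν • Jmat n

/-- `D_k(w) = diag(w^{k_1}, …, w^{k_n}, w^{-k_1}, …, w^{-k_n})`. -/
def Dk {n : ℕ} (kk : Fin n → ℤ) (w : ℂ) : Mat n ℂ :=
  Matrix.diagonal (Sum.elim (fun i => w ^ kk i) (fun i => w ^ (-kk i)))

/-- A tuple `(k_1, …, k_n)` of integers is regular if each `k_i` is nonzero and
`k_i ≠ ±k_j` for all `i ≠ j`. -/
def Regular {n : ℕ} (kk : Fin n → ℤ) : Prop :=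
  (∀ i, kk i ≠ 0) ∧ ∀ i j, i ≠ j → kk i ≠ kk j ∧ kk i ≠ -kk j

lemma two_zpow_inj : Function.Injective (fun m : ℤ => (2:ℂ)^m) := by
  intro m l h
  simp only at h
  have : ((2:ℝ):ℂ)^m = ((2:ℝ):ℂ)^l := by push_cast; exact_mod_cast h
  rw [← Complex.ofReal_zpow, ← Complex.ofReal_zpow] at this
  have h2 : (2:ℝ)^m = (2:ℝ)^l := by exact_mod_cast this
  exact zpow_right_injective₀ (by norm_num) (by norm_num) h2

/-- The centralizer in `GSp_{2n}(ℂ)` of `{D_k(w) : w ∈ ℂ×}` is exactly the diagonal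
torus `{diag(t_1, …, t_n, t_1⁻¹x, …, t_n⁻¹x)}`. -/
theorem centralizer_eq_diagonal_torus (n : ℕ) (hn : 1 ≤ n) (kk : Fin n → ℤ)
    (hreg : Regular kk) :
    {A : Mat n ℂ | (∃ ν : ℂ, inGSp n A ν) ∧ ∀ w : ℂ, w ≠ 0 → A * Dk kk w = Dk kk w * A}
      = {A : Mat n ℂ | ∃ (t : Fin n → ℂ) (x : ℂ), (∀ i, t i ≠ 0) ∧ x ≠ 0 ∧
          A = Matrix.diagonal (Sum.elim t (fun i => (t i)⁻¹ * x))} := by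
  obtain ⟨hnz, hpm⟩ := hreg
  ext A
  simp only [Set.mem_setOf_eq]
  constructor
  · rintro ⟨⟨ν, hdet, hν, hJ⟩, hcomm⟩
    set e : Fin n ⊕ Fin n → ℤ := Sum.elim kk (fun i => -kk i) with he
    have hinj : ∀ i j : Fin n ⊕ Fin n, i ≠ j → e i ≠ e j := by
      rintro (i|i) (j|j) hij <;> simp only [he, Sum.elim_inl, Sum.elim_inr]
      · exact (hpm i j (by simpa using hij)).1
      · rcases eq_or_ne i j with rfl | h
        · intro hc; exact hnz i (by omega)
        · exact (hpm i j h).2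
      · rcases eq_or_ne i j with rfl | h
        · intro hc; exact hnz i (by omega)
        · intro hc; exact (hpm j i h.symm).2 (by omega)
      · intro hc; exact (hpm i j (by simpa using hij)).1 (by omega)
    have hDke : ∀ (w : ℂ), Dk kk w = Matrix.diagonal (fun i => w ^ e i) := by
      intro w
      unfold Dk
      apply congrArg Matrix.diagonal
      funext i
      cases i <;> rfl
    have hz : ∀ i j, i ≠ j → A i j = 0 := by
      intro i j hij
      have h2 := hcomm 2 (by norm_num)
      rw [hDke] at h2
      have h3 := congrFun (congrFun h2 i) j
      simp only [mul_diagonal, diagonal_mul] at h3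
      -- h3 : A i j * 2 ^ e j = 2 ^ e i * A i j
      by_contra hA0
      apply hinj i j hij
      apply two_zpow_inj
      have : (2:ℂ) ^ e j * A i j = 2 ^ e i * A i j := by rw [← h3]; ring
      exact (mul_right_cancel₀ hA0 this).symm
    have hA : A = Matrix.diagonal (fun i => A i i) := by
      ext i j
      rcases eq_or_ne i j with rfl | h
      · simp
      · simp [Matrix.diagonal_apply_ne _ h, hz _ _ h]
    -- extract ν relation
    have hrel : ∀ i : Fin n, A (Sum.inl i) (Sum.inl i) * A (Sum.inr i) (Sum.inr i) = ν := by
      intro i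
      have := congrFun (congrFun hJ (Sum.inl i)) (Sum.inr i)
      rw [hA] at this
      simpa [Jmat, Matrix.diagonal_transpose, Matrix.mul_diagonal, Matrix.diagonal_mul,
        fromBlocks_apply₁₂, Matrix.one_apply, Matrix.smul_apply] using this
    refine ⟨fun i => A (Sum.inl i) (Sum.inl i), ν, ?_, hν, ?_⟩
    · intro i hti
      exact hν (by rw [← hrel i, show A (Sum.inl i) (Sum.inl i) = 0 from hti, zero_mul])
    · rw [hA]
      apply congrArg Matrix.diagonal
      funext i
      cases i with
      | inl i => simp
      | inr i =>
        simp only [Sum.elim_inr]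
        have h1 : A (Sum.inl i) (Sum.inl i) ≠ 0 := by
          intro hti; exact hν (by rw [← hrel i, hti, zero_mul])
        field_simp
        simp only [Matrix.diagonal_apply_eq]
        exact (eq_div_iff h1).2 ((mul_comm _ _).trans (hrel i))
  · rintro ⟨t, x, ht, hx, rfl⟩
    have hd : ∀ i : Fin n ⊕ Fin n, Sum.elim t (fun i => (t i)⁻¹ * x) i ≠ 0 := by
      rintro (i|i) <;> simp [ht i, hx]
    refine ⟨⟨x, ?_, hx, ?_⟩, ?_⟩
    · rw [Matrix.det_diagonal]
      exact (Finset.prod_ne_zero_iff.2 fun i _ => hd i).isUnit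
    · ext i j
      rw [Matrix.diagonal_transpose]
      rcases i with i | i <;> rcases j with j | j <;>
        simp only [Jmat, Matrix.mul_diagonal, Matrix.diagonal_mul, Matrix.smul_apply,
          fromBlocks_apply₁₁, fromBlocks_apply₁₂, fromBlocks_apply₂₁, fromBlocks_apply₂₂,
          Sum.elim_inl, Sum.elim_inr, Matrix.zero_apply, Matrix.one_apply, Matrix.neg_apply,
          smul_eq_mul, mul_zero, zero_mul, smul_zero]
      · rcases eq_or_ne i j with rfl | h
        · simp only [if_pos rfl, mul_one, one_mul]
          field_simp
          exact div_self (ht i)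
        · simp [h]
      · rcases eq_or_ne i j with rfl | h
        · simp only [if_pos rfl]
          field_simp
          rw [div_self (ht i)]
        · simp [h]
    · intro w hw
      unfold Dk
      rw [Matrix.diagonal_mul_diagonal, Matrix.diagonal_mul_diagonal]
      apply congrArg Matrix.diagonal
      funext i
      exact mul_comm _ _
end
end

section
/- Let n ≥ 1 and let k = (k_1, …, k_n) be a regular tuple of integers. If J ∈ GSp_{2n}(ℂ) satisfies J D_k(w) J^{−1} = D_k(w)^{−1} for every w ∈ ℂ× and J² = 1, then its symplectic multiplier is ν(J) = −1. Moreover such a J exists: the block matrix [[0, 1_n], [1_n, 0]] is one. -/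
open Matrix

noncomputable section

lemma expinj : Function.Injective (fun a : ℤ => (2:ℂ) ^ a) := by
  intro a b h
  have h' : (2:ℂ) ^ a = (2:ℂ) ^ b := h
  have h2 : ‖(2:ℂ) ^ a‖ = ‖(2:ℂ) ^ b‖ := by rw [h']
  rw [norm_zpow, norm_zpow] at h2
  have hn : ‖(2:ℂ)‖ = 2 := by simp
  rw [hn] at h2
  exact zpow_right_injective₀ (by norm_num) (by norm_num) h2

lemma dkinv {n : ℕ} (kk : Fin n → ℤ) (w : ℂ) (hw : w ≠ 0) :
    (Dk kk w)⁻¹ = Matrix.diagonal (fun p =>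
      (Sum.elim (fun i => w ^ kk i) (fun i => w ^ (-kk i)) p)⁻¹) := by
  apply Matrix.inv_eq_right_inv
  rw [Dk, diagonal_mul_diagonal]
  convert Matrix.diagonal_one with p
  exact mul_inv_cancel₀ (by cases p <;> exact zpow_ne_zero _ hw)

/-- Any `J ∈ GSp_{2n}(ℂ)` with `J D_k(w) J⁻¹ = D_k(w)⁻¹` for all `w ∈ ℂ×` and `J² = 1`
has symplectic multiplier `-1`; moreover `[[0, 1], [1, 0]]` is such a `J`. -/
theorem gsp_involution_multiplier (n : ℕ) (hn : 1 ≤ n) (kk : Fin n → ℤ)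
    (hreg : Regular kk) :
    (∀ (J : Mat n ℂ) (ν : ℂ), inGSp n J ν →
        (∀ w : ℂ, w ≠ 0 → J * Dk kk w * J⁻¹ = (Dk kk w)⁻¹) → J * J = 1 → ν = -1) ∧
    (inGSp n (fromBlocks 0 1 1 0) (-1) ∧
      (∀ w : ℂ, w ≠ 0 →
        (fromBlocks 0 1 1 0 : Mat n ℂ) * Dk kk w * (fromBlocks 0 1 1 0 : Mat n ℂ)⁻¹
          = (Dk kk w)⁻¹) ∧
      (fromBlocks 0 1 1 0 : Mat n ℂ) * fromBlocks 0 1 1 0 = 1) := by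
  obtain ⟨hk0, hkij⟩ := hreg
  set e : Fin n ⊕ Fin n → ℤ := Sum.elim kk (fun i => -kk i) with he
  set d : Fin n ⊕ Fin n → ℂ := fun p => (2:ℂ) ^ e p with hd
  have hde : Dk kk 2 = Matrix.diagonal d := by
    rw [Dk]; congr 1; funext p; cases p <;> rfl
  have hdinv : (Dk kk 2)⁻¹ = Matrix.diagonal (fun p => (d p)⁻¹) := by
    rw [dkinv kk 2 two_ne_zero]; congr 1; funext p; cases p <;> rfl
  have hswap : ∀ p q : Fin n ⊕ Fin n, e q = -e p → q = Sum.swap p := by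
    rintro (i | i) (j | j) h <;>
      simp only [he, Sum.elim_inl, Sum.elim_inr, Sum.swap_inl, Sum.swap_inr, neg_neg] at h
    · exfalso
      rcases eq_or_ne j i with rfl | hne
      · exact hk0 j (by omega)
      · exact (hkij j i hne).2 h
    · rcases eq_or_ne j i with rfl | hne
      · rfl
      · exact absurd (by omega : kk j = kk i) (hkij j i hne).1
    · rcases eq_or_ne j i with rfl | hne
      · rfl
      · exact absurd h (hkij j i hne).1
    · exfalso
      rcases eq_or_ne j i with rfl | hne
      · exact hk0 j (by omega)
      · exact (hkij j i hne).2 (by omega)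
  constructor
  · rintro J ν ⟨-, -, hGSp⟩ hconj hJ2
    have hJinv : J⁻¹ = J := Matrix.inv_eq_right_inv hJ2
    have hJD : J * Matrix.diagonal d = Matrix.diagonal (fun p => (d p)⁻¹) * J := by
      have h := hconj 2 two_ne_zero
      rw [hJinv, hdinv, hde] at h
      calc J * Matrix.diagonal d = (J * Matrix.diagonal d * J) * J := by
            rw [mul_assoc, hJ2, mul_one]
        _ = Matrix.diagonal (fun p => (d p)⁻¹) * J := by rw [h]
    have hzero : ∀ p q, q ≠ Sum.swap p → J p q = 0 := by
      intro p q hne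
      by_contra hJpq
      have h : (J * Matrix.diagonal d) p q = (Matrix.diagonal (fun p => (d p)⁻¹) * J) p q := by
        rw [hJD]
      rw [mul_diagonal, diagonal_mul] at h
      rw [mul_comm ((d p)⁻¹)] at h
      have hdq : d q = (d p)⁻¹ := mul_left_cancel₀ hJpq h
      have h2 : (2:ℂ) ^ e q = (2:ℂ) ^ (-e p) := by rw [_root_.zpow_neg]; exact hdq
      exact hne (hswap p q (expinj h2))
    have hb : ∀ p, J p (Sum.swap p) * J (Sum.swap p) p = 1 := by
      intro p
      have h : (J * J) p p = (1 : Mat n ℂ) p p := by rw [hJ2]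
      rw [mul_apply, Matrix.one_apply_eq,
        Finset.sum_eq_single (Sum.swap p) (fun q _ hq => by rw [hzero p q hq, zero_mul])
          (fun hh => absurd (Finset.mem_univ _) hh)] at h
      exact h
    set i : Fin n := ⟨0, hn⟩
    have h : (Jᵀ * Jmat n * J) (Sum.inl i) (Sum.inr i)
        = (ν • Jmat n) (Sum.inl i) (Sum.inr i) := by rw [hGSp]
    have hJm1 : (Jmat n) (Sum.inl i) (Sum.inr i) = 1 := by
      simp [Jmat, fromBlocks_apply₁₂]
    have hJm2 : (Jmat n) (Sum.inr i) (Sum.inl i) = -1 := by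
      simp [Jmat, fromBlocks_apply₂₁]
    rw [Matrix.smul_apply, hJm1, smul_eq_mul, mul_one] at h
    rw [mul_apply] at h
    have hsum : ∀ s, s ≠ Sum.inl i → (Jᵀ * Jmat n) (Sum.inl i) s * J s (Sum.inr i) = 0 := by
      intro s hs
      have hz : J s (Sum.inr i) = 0 := by
        apply hzero
        intro hc
        have h2 := congrArg Sum.swap hc
        simp only [Sum.swap_swap, Sum.swap_inr] at h2
        exact hs h2.symm
      rw [hz, mul_zero]
    rw [Finset.sum_eq_single (Sum.inl i) (fun s _ hs => hsum s hs)
      (fun hh => absurd (Finset.mem_univ _) hh)] at h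
    rw [mul_apply] at h
    have hsum2 : ∀ r, r ≠ Sum.inr i → Jᵀ (Sum.inl i) r * (Jmat n) r (Sum.inl i) = 0 := by
      intro r hr
      have hz : J r (Sum.inl i) = 0 := by
        apply hzero
        intro hc
        have h2 := congrArg Sum.swap hc
        simp only [Sum.swap_swap, Sum.swap_inl] at h2
        exact hr h2.symm
      rw [Matrix.transpose_apply, hz, zero_mul]
    rw [Finset.sum_eq_single (Sum.inr i) (fun r _ hr => hsum2 r hr)
      (fun hh => absurd (Finset.mem_univ _) hh)] at h
    rw [Matrix.transpose_apply, hJm2] at h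
    have hbb := hb (Sum.inr i)
    rw [Sum.swap_inr] at hbb
    rw [← h]
    linear_combination -hbb
  · set S : Mat n ℂ := fromBlocks 0 1 1 0 with hS
    have hSS : S * S = 1 := by
      rw [hS, fromBlocks_multiply]
      simp [← fromBlocks_one]
    have hSinv : S⁻¹ = S := Matrix.inv_eq_right_inv hSS
    refine ⟨⟨?_, by norm_num, ?_⟩, ?_, hSS⟩
    · have hdet : S.det * S.det = 1 := by rw [← det_mul, hSS, det_one]
      exact IsUnit.of_mul_eq_one _ hdet
    · have hST : Sᵀ = S := by
        rw [hS, fromBlocks_transpose]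
        simp
      rw [hST, hS, Jmat, fromBlocks_multiply, fromBlocks_multiply, fromBlocks_smul]
      simp
    · intro w hw
      rw [hSinv, dkinv kk w hw, hS, Dk, ← fromBlocks_diagonal, fromBlocks_multiply,
        fromBlocks_multiply]
      have hfun : (fun p => (Sum.elim (fun i => w ^ kk i) (fun i => w ^ (-kk i)) p)⁻¹)
          = Sum.elim (fun i => w ^ (-kk i)) (fun i => w ^ kk i) := by
        funext p; cases p
        · exact (zpow_neg w _).symm
        · simp only [Sum.elim_inr]; rw [_root_.zpow_neg, inv_inv]
      rw [hfun, ← fromBlocks_diagonal]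
      simp
end
end
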